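/- arXiv:1905.03614 — 4 statements merged into one kernel-verified Lean document; each statement's English description precedes it below -/
import Mathlib

section
/- Suppose a set of POVMs $\{A_{a|x}\}$ on $\mathbb{C}^d$ has the property that for every density matrix $\rho$ there is a decomposition $\mathrm{Tr}[\rho A_{a|x}] = \sum_{\lambda} p(\lambda|\rho) p(a|x,\lambda)$ where, for each fixed $\lambda$, the map $\rho \mapsto p(\lambda|\rho)$ is affine in $\rho$ (independent of measurement setting and outcome) and $p(a|x,\lambda)$ is a conditional probability distribution independent of $\rho$. Then $\{A_{a|x}\}$ is jointly measurable: there exists a POVM $\{G_\lambda\}$ with $A_{a|x} = \sum_\lambda p(a|x,\lambda) G_\lambda$. -/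
open Matrix BigOperators ComplexOrder

namespace PNCaux

variable {d : ℕ}

abbrev Mat (d : ℕ) := Matrix (Fin d) (Fin d) ℂ

/-- Quadratic form of a single basis vector gives a diagonal entry. -/
lemma dot_single (M : Mat d) (a b : Fin d) :
    star (Pi.single a (1:ℂ)) ⬝ᵥ M *ᵥ Pi.single b (1:ℂ) = M a b := by
  simp [dotProduct, mulVec, Pi.single_apply, Finset.mul_sum]

lemma psd_diag {M : Mat d} (hM : M.PosSemidef) (i : Fin d) : 0 ≤ M i i := by
  have := hM.dotProduct_mulVec_nonneg (Pi.single i 1)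
  rwa [dot_single] at this

lemma psd_trace {M : Mat d} (hM : M.PosSemidef) :
    M.trace = (M.trace.re : ℂ) ∧ 0 ≤ M.trace.re := by
  have h : 0 ≤ M.trace := Finset.sum_nonneg fun i _ => psd_diag hM i
  rw [Complex.le_def] at h
  exact ⟨Complex.ext (by simp) (by simp [← h.2]), by simpa using h.1⟩

lemma psd_trace_zero {M : Mat d} (hM : M.PosSemidef) (h : M.trace.re = 0) : M = 0 := by
  have htr : M.trace = 0 := by rw [(psd_trace hM).1, h]; simp
  exact hM.trace_eq_zero_iff.mp htr

lemma psd_smul {M : Mat d} (hM : M.PosSemidef) {c : ℝ} (hc : 0 ≤ c) :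
    ((c:ℂ) • M).PosSemidef := by
  refine PosSemidef.of_dotProduct_mulVec_nonneg ?_ ?_
  · unfold Matrix.IsHermitian
    rw [conjTranspose_smul, hM.1]
    simp
  · intro x
    rw [smul_mulVec, dotProduct_smul]
    exact smul_nonneg (by exact_mod_cast Complex.zero_le_real.mpr hc) (hM.dotProduct_mulVec_nonneg x)

/-- If all quadratic forms vanish, the matrix is zero. -/
lemma eq_zero_of_quadratic {M : Mat d}
    (h : ∀ v : Fin d → ℂ, star v ⬝ᵥ M *ᵥ v = 0) : M = 0 := by
  have hB : ∀ u w : Fin d → ℂ, star u ⬝ᵥ M *ᵥ w + star w ⬝ᵥ M *ᵥ u = 0 := by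
    intro u w
    have h3 := h (u + w)
    simp only [star_add, Matrix.mulVec_add, add_dotProduct, dotProduct_add] at h3
    have h1 := h u
    have h2 := h w
    linear_combination h3 - h1 - h2
  ext a b
  have hs1 : ∀ (a b : Fin d) (c : ℂ),
      star (Pi.single a (1:ℂ)) ⬝ᵥ M *ᵥ (c • (Pi.single b 1 : Fin d → ℂ)) = c * M a b := by
    intro a b c
    rw [Matrix.mulVec_smul, dotProduct_smul, dot_single]
    rfl
  have hs2 : ∀ (a b : Fin d) (c : ℂ),
      star (c • (Pi.single b 1 : Fin d → ℂ)) ⬝ᵥ M *ᵥ Pi.single a 1 = starRingEnd ℂ c * M b a := by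
    intro a b c
    rw [star_smul, smul_dotProduct, dot_single]
    rfl
  have h1 := hB (Pi.single a 1) (Pi.single b 1)
  rw [dot_single, dot_single] at h1  -- fails? h1 has plain single vectors
  have h2 := hB (Pi.single a 1) (Complex.I • (Pi.single b 1 : Fin d → ℂ))
  rw [hs1, hs2] at h2
  simp only [Complex.conj_I] at h2
  have : (2:ℂ) * M a b = 0 := by linear_combination h1 - Complex.I * h2 + (M a b - M b a) * Complex.I_sq
  simpa using this


/-- Every Hermitian matrix is a difference of two PSD matrices. -/
lemma herm_decomp {H : Mat d} (hH : H.IsHermitian) :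
    ∃ P N : Mat d, P.PosSemidef ∧ N.PosSemidef ∧ H = P - N := by
  classical
  refine ⟨(hH.eigenvectorUnitary : Mat d) * diagonal (fun i => ((max (hH.eigenvalues i) 0 : ℝ) : ℂ)) * star (hH.eigenvectorUnitary : Mat d),
          (hH.eigenvectorUnitary : Mat d) * diagonal (fun i => ((max (-hH.eigenvalues i) 0 : ℝ) : ℂ)) * star (hH.eigenvectorUnitary : Mat d), ?_, ?_, ?_⟩
  · exact (Matrix.PosSemidef.diagonal (fun i => Complex.zero_le_real.mpr (le_max_right _ _))).mul_mul_conjTranspose_same _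
  · exact (Matrix.PosSemidef.diagonal (fun i => Complex.zero_le_real.mpr (le_max_right _ _))).mul_mul_conjTranspose_same _
  · have hmax : ∀ a : ℝ, max a 0 - max (-a) 0 = a := by
      intro a
      rcases le_or_gt 0 a with h | h
      · rw [max_eq_left h, max_eq_right (by linarith)]; ring
      · rw [max_eq_right h.le, max_eq_left (by linarith)]; ring
    have hdiag : diagonal (RCLike.ofReal ∘ hH.eigenvalues)
        = diagonal (fun i => ((max (hH.eigenvalues i) 0 : ℝ) : ℂ))
          - diagonal (fun i => ((max (-hH.eigenvalues i) 0 : ℝ) : ℂ)) := by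
      ext i j
      rcases eq_or_ne i j with rfl | h
      · rw [Matrix.sub_apply, diagonal_apply_eq, diagonal_apply_eq, diagonal_apply_eq,
          ← Complex.ofReal_sub, hmax]
        rfl
      · rw [Matrix.sub_apply, diagonal_apply_ne _ h, diagonal_apply_ne _ h, diagonal_apply_ne _ h]
        simp
    conv_lhs => rw [hH.spectral_theorem, hdiag]
    rw [Unitary.conjStarAlgAut_apply, mul_sub, sub_mul]

section Extension

variable (pl : Mat d → ℝ)

/-- Positively-homogeneous extension of `pl` to the PSD cone. -/
noncomputable def f (M : Mat d) : ℝ :=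
  M.trace.re * pl ((((M.trace.re)⁻¹ : ℝ) : ℂ) • M)

variable {pl}

lemma f_density {ρ : Mat d} (ht : ρ.trace = 1) : f pl ρ = pl ρ := by
  have : ρ.trace.re = 1 := by rw [ht]; simp
  simp [f, this]

lemma f_zero : f pl (0 : Mat d) = 0 := by simp [f]

/-- The normalization of a nonzero PSD matrix is a density matrix. -/
lemma normalized_density {M : Mat d} (hM : M.PosSemidef) (ht : M.trace.re ≠ 0) :
    ((((M.trace.re)⁻¹ : ℝ) : ℂ) • M).PosSemidef ∧ ((((M.trace.re)⁻¹ : ℝ) : ℂ) • M).trace = 1 := by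
  have h1 := (psd_trace hM).1
  have h2 := (psd_trace hM).2
  set r := M.trace.re with hr
  refine ⟨psd_smul hM (inv_nonneg.mpr h2), ?_⟩
  rw [Matrix.trace_smul, smul_eq_mul, h1, ← Complex.ofReal_mul, inv_mul_cancel₀ ht]
  simp

lemma f_nonneg (hpos : ∀ ρ : Mat d, ρ.PosSemidef → ρ.trace = 1 → 0 ≤ pl ρ)
    {M : Mat d} (hM : M.PosSemidef) : 0 ≤ f pl M := by
  rcases eq_or_ne M.trace.re 0 with h | h
  · simp [f, h]
  · obtain ⟨h1, h2⟩ := normalized_density hM h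
    exact mul_nonneg ((psd_trace hM).2) (hpos _ h1 h2)

lemma f_smul {M : Mat d} (hM : M.PosSemidef) {c : ℝ} (hc : 0 ≤ c) :
    f pl ((c:ℂ) • M) = c * f pl M := by
  rcases eq_or_ne M.trace.re 0 with h | h
  · rw [psd_trace_zero hM h]
    simp [f]
  rcases eq_or_ne c 0 with rfl | hc0
  · simp [f]
  have h1 := (psd_trace hM).1
  set r := M.trace.re with hr
  have htr : ((c:ℂ) • M).trace.re = c * r := by
    rw [Matrix.trace_smul, smul_eq_mul, h1, ← Complex.ofReal_mul]
    simp
  have hsm : (((((c:ℂ) • M).trace.re)⁻¹ : ℝ) : ℂ) • ((c:ℂ) • M)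
      = ((r⁻¹ : ℝ) : ℂ) • M := by
    rw [htr, smul_smul]
    congr 1
    push_cast
    rw [mul_inv]
    field_simp
  rw [f, hsm, htr, f]
  ring

variable (haff : ∀ t : ℝ, 0 ≤ t → t ≤ 1 →
      ∀ ρ₁ ρ₂ : Mat d,
        ρ₁.PosSemidef → ρ₁.trace = 1 → ρ₂.PosSemidef → ρ₂.trace = 1 →
        pl ((t : ℂ) • ρ₁ + ((1 - t : ℝ) : ℂ) • ρ₂) = t * pl ρ₁ + (1 - t) * pl ρ₂)

include haff

lemma f_add {ρ σ : Mat d} (hρ : ρ.PosSemidef) (hσ : σ.PosSemidef) :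
    f pl (ρ + σ) = f pl ρ + f pl σ := by
  rcases eq_or_ne ρ.trace.re 0 with h | hs
  · rw [psd_trace_zero hρ h]
    simp [f_zero]
  rcases eq_or_ne σ.trace.re 0 with h | ht
  · rw [psd_trace_zero hσ h]
    simp [f_zero]
  obtain ⟨hρ1, hρ2⟩ := normalized_density hρ hs
  obtain ⟨hσ1, hσ2⟩ := normalized_density hσ ht
  set s := ρ.trace.re with hs_def
  set t := σ.trace.re with ht_def
  have hs' : 0 < s := lt_of_le_of_ne (psd_trace hρ).2 (Ne.symm hs)
  have ht' : 0 < t := lt_of_le_of_ne (psd_trace hσ).2 (Ne.symm ht)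
  have hst : 0 < s + t := by linarith
  have hstne : s + t ≠ 0 := ne_of_gt hst
  set u : ℝ := s / (s + t) with hu_def
  have hu0 : 0 ≤ u := le_of_lt (div_pos hs' hst)
  have hu1 : u ≤ 1 := by
    rw [hu_def, div_le_one hst]; linarith
  have h1u : (1 - u : ℝ) = t / (s + t) := by
    rw [hu_def]; field_simp; ring
  have key := haff u hu0 hu1 _ _ hρ1 hρ2 hσ1 hσ2
  have harg : (u : ℂ) • (((s⁻¹ : ℝ) : ℂ) • ρ) + (((1 - u : ℝ)) : ℂ) • (((t⁻¹ : ℝ) : ℂ) • σ)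
      = ((((s + t)⁻¹ : ℝ) : ℂ) • (ρ + σ)) := by
    rw [smul_add, smul_smul, smul_smul]
    congr 2
    · rw [hu_def]
      push_cast
      field_simp
    · rw [h1u]
      push_cast
      field_simp
  have htr2 : (ρ + σ).trace.re = s + t := by
    rw [Matrix.trace_add, Complex.add_re, hs_def, ht_def]
  rw [f, htr2, ← harg, key, f, f]
  rw [hu_def, h1u]
  field_simp
  rfl

open scoped Classical in
/-- The extension of `pl` to Hermitian matrices via PSD decompositions. -/
noncomputable def F (pl : Mat d → ℝ) (M : Mat d) : ℝ :=
  if h : ∃ PN : Mat d × Mat d, PN.1.PosSemidef ∧ PN.2.PosSemidef ∧ M = PN.1 - PN.2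
  then f pl h.choose.1 - f pl h.choose.2 else 0

lemma F_eq {M P N : Mat d} (hP : P.PosSemidef) (hN : N.PosSemidef) (hM : M = P - N) :
    F pl M = f pl P - f pl N := by
  have hex : ∃ PN : Mat d × Mat d, PN.1.PosSemidef ∧ PN.2.PosSemidef ∧ M = PN.1 - PN.2 :=
    ⟨(P, N), hP, hN, hM⟩
  rw [F, dif_pos hex]
  obtain ⟨h1, h2, h3⟩ := hex.choose_spec
  have h4 : P - N = hex.choose.1 - hex.choose.2 := by rw [← hM, ← h3]
  rw [sub_eq_sub_iff_add_eq_add] at h4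
  have hsum : hex.choose.1 + N = P + hex.choose.2 := h4.symm
  have e1 : f pl hex.choose.1 + f pl N = f pl P + f pl hex.choose.2 := by
    rw [← f_add haff h1 hN, ← f_add haff hP h2, hsum]
  linarith

lemma F_psd {P : Mat d} (hP : P.PosSemidef) : F pl P = f pl P := by
  rw [F_eq haff hP Matrix.PosSemidef.zero (by simp)]
  simp [f_zero]

lemma F_add {M N : Mat d} (hM : M.IsHermitian) (hN : N.IsHermitian) :
    F pl (M + N) = F pl M + F pl N := by
  obtain ⟨P1, N1, hP1, hN1, hd1⟩ := herm_decomp hM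
  obtain ⟨P2, N2, hP2, hN2, hd2⟩ := herm_decomp hN
  rw [F_eq haff hP1 hN1 hd1, F_eq haff hP2 hN2 hd2,
    F_eq haff (hP1.add hP2) (hN1.add hN2) (by rw [hd1, hd2]; abel),
    f_add haff hP1 hP2, f_add haff hN1 hN2]
  ring

lemma F_smul (t : ℝ) {M : Mat d} (hM : M.IsHermitian) :
    F pl ((t:ℂ) • M) = t * F pl M := by
  obtain ⟨P, N, hP, hN, hd⟩ := herm_decomp hM
  rcases le_or_gt 0 t with h | h
  · rw [F_eq haff (psd_smul hP h) (psd_smul hN h) (by rw [hd, smul_sub]),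
      F_eq haff hP hN hd, f_smul hP h, f_smul hN h]
    ring
  · have h' : 0 ≤ -t := by linarith
    rw [F_eq haff (psd_smul hN h') (psd_smul hP h')
        (by rw [hd]; push_cast; module),
      F_eq haff hP hN hd, f_smul hN h', f_smul hP h']
    ring


end Extension

noncomputable def hermPart (M : Mat d) : Mat d := (1/2 : ℂ) • (M + Mᴴ)

noncomputable def skewPart (M : Mat d) : Mat d := (-(Complex.I)/2) • (M - Mᴴ)

lemma hermPart_isHermitian (M : Mat d) : (hermPart M).IsHermitian := by
  unfold Matrix.IsHermitian hermPart
  rw [conjTranspose_smul, conjTranspose_add, conjTranspose_conjTranspose]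
  rw [show star (1/2 : ℂ) = (1/2 : ℂ) by simp]
  rw [add_comm]

lemma skewPart_isHermitian (M : Mat d) : (skewPart M).IsHermitian := by
  unfold Matrix.IsHermitian skewPart
  rw [conjTranspose_smul, conjTranspose_sub, conjTranspose_conjTranspose]
  rw [show star (-(Complex.I)/2 : ℂ) = (Complex.I/2 : ℂ) by simp]
  module

lemma hermPart_add (M N : Mat d) : hermPart (M + N) = hermPart M + hermPart N := by
  unfold hermPart
  rw [conjTranspose_add]
  module

lemma skewPart_add (M N : Mat d) : skewPart (M + N) = skewPart M + skewPart N := by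
  unfold skewPart
  rw [conjTranspose_add]
  module

lemma hermPart_real_smul (t : ℝ) (M : Mat d) :
    hermPart ((t:ℂ) • M) = (t:ℂ) • hermPart M := by
  unfold hermPart
  rw [conjTranspose_smul, Complex.star_def, Complex.conj_ofReal]
  module

lemma skewPart_real_smul (t : ℝ) (M : Mat d) :
    skewPart ((t:ℂ) • M) = (t:ℂ) • skewPart M := by
  unfold skewPart
  rw [conjTranspose_smul, Complex.star_def, Complex.conj_ofReal]
  module

lemma hermPart_I_smul (M : Mat d) : hermPart (Complex.I • M) = -skewPart M := by
  unfold hermPart skewPart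
  rw [conjTranspose_smul, Complex.star_def, Complex.conj_I]
  module

lemma skewPart_I_smul (M : Mat d) : skewPart (Complex.I • M) = hermPart M := by
  unfold hermPart skewPart
  rw [conjTranspose_smul, Complex.star_def, Complex.conj_I]
  have hI : (-(Complex.I)/2) * Complex.I = (1/2 : ℂ) := by
    have := Complex.I_mul_I
    field_simp
    rw [Complex.I_sq]; ring
  rw [smul_sub, smul_smul, smul_smul, hI]
  have hI2 : (-(Complex.I)/2) * (-Complex.I) = (-1/2 : ℂ) := by
    have := Complex.I_mul_I
    field_simp
    rw [Complex.I_sq]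
  rw [hI2]
  module

lemma hermPart_psd {P : Mat d} (hP : P.IsHermitian) : hermPart P = P := by
  unfold hermPart
  rw [hP]
  match_scalars
  ring

lemma skewPart_psd {P : Mat d} (hP : P.IsHermitian) : skewPart P = 0 := by
  unfold skewPart
  rw [hP, sub_self, smul_zero]

lemma parts_sum (M : Mat d) : M = hermPart M + Complex.I • skewPart M := by
  unfold hermPart skewPart
  rw [smul_smul]
  have hI : Complex.I * (-(Complex.I)/2) = (1/2 : ℂ) := by
    have := Complex.I_mul_I
    field_simp
    rw [Complex.I_sq]; ring
  rw [hI]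
  match_scalars <;> ring

lemma hermPart_conjTranspose (M : Mat d) : hermPart Mᴴ = hermPart M := by
  unfold hermPart
  rw [conjTranspose_conjTranspose]
  module

lemma skewPart_conjTranspose (M : Mat d) : skewPart Mᴴ = ((-1 : ℝ) : ℂ) • skewPart M := by
  unfold skewPart
  rw [conjTranspose_conjTranspose]
  push_cast
  module

section LinearPart

variable {pl : Mat d → ℝ}
variable (haff : ∀ t : ℝ, 0 ≤ t → t ≤ 1 →
      ∀ ρ₁ ρ₂ : Mat d,
        ρ₁.PosSemidef → ρ₁.trace = 1 → ρ₂.PosSemidef → ρ₂.trace = 1 →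
        pl ((t : ℂ) • ρ₁ + ((1 - t : ℝ) : ℂ) • ρ₂) = t * pl ρ₁ + (1 - t) * pl ρ₂)

/-- The complex-linear extension of `pl`. -/
noncomputable def L (pl : Mat d → ℝ) (M : Mat d) : ℂ :=
  ((F pl (hermPart M) : ℝ) : ℂ) + Complex.I * ((F pl (skewPart M) : ℝ) : ℂ)

include haff

lemma L_psd {P : Mat d} (hP : P.PosSemidef) : L pl P = ((f pl P : ℝ) : ℂ) := by
  rw [L, hermPart_psd hP.1, skewPart_psd hP.1, F_psd haff hP,
    F_psd haff Matrix.PosSemidef.zero, f_zero]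
  simp

lemma L_zero : L pl (0 : Mat d) = 0 := by
  have := L_psd haff (Matrix.PosSemidef.zero (n := Fin d) (R := ℂ))
  rw [this, f_zero]
  simp

lemma L_add (M N : Mat d) : L pl (M + N) = L pl M + L pl N := by
  rw [L, L, L, hermPart_add, skewPart_add,
    F_add haff (hermPart_isHermitian M) (hermPart_isHermitian N),
    F_add haff (skewPart_isHermitian M) (skewPart_isHermitian N)]
  push_cast
  ring

lemma L_real_smul (t : ℝ) (M : Mat d) : L pl ((t:ℂ) • M) = (t:ℂ) * L pl M := by
  rw [L, L, hermPart_real_smul, skewPart_real_smul,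
    F_smul haff t (hermPart_isHermitian M), F_smul haff t (skewPart_isHermitian M)]
  push_cast
  ring

lemma L_I_smul (M : Mat d) : L pl (Complex.I • M) = Complex.I * L pl M := by
  rw [L, L, hermPart_I_smul, skewPart_I_smul]
  have hneg : -skewPart M = ((-1 : ℝ) : ℂ) • skewPart M := by push_cast; module
  rw [hneg, F_smul haff (-1) (skewPart_isHermitian M)]
  push_cast
  ring_nf
  rw [Complex.I_sq]
  ring

lemma L_smul (c : ℂ) (M : Mat d) : L pl (c • M) = c * L pl M := by
  have hc : c • M = ((c.re : ℝ) : ℂ) • M + ((c.im : ℝ) : ℂ) • (Complex.I • M) := by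
    rw [smul_smul, ← add_smul]
    congr 1
    rw [mul_comm _ Complex.I, ← Complex.re_add_im c]
    push_cast
    ring_nf
    simp [Complex.ext_iff]
  rw [hc, L_add haff, L_real_smul haff, L_real_smul haff, L_I_smul haff]
  linear_combination (L pl M) * (Complex.re_add_im c)

lemma L_conj (M : Mat d) : L pl (Mᴴ) = starRingEnd ℂ (L pl M) := by
  rw [L, L, hermPart_conjTranspose, skewPart_conjTranspose,
    F_smul haff (-1) (skewPart_isHermitian M)]
  simp [Complex.ext_iff]

lemma L_sum {ι : Type*} (s : Finset ι) (g : ι → Mat d) :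
    L pl (∑ i ∈ s, g i) = ∑ i ∈ s, L pl (g i) := by
  classical
  induction s using Finset.cons_induction with
  | empty => simpa using L_zero haff
  | cons a s ha ih =>
    rw [Finset.sum_cons, Finset.sum_cons, L_add haff, ih]

end LinearPart



section G

variable {pl : Mat d → ℝ}
variable (haff : ∀ t : ℝ, 0 ≤ t → t ≤ 1 →
      ∀ ρ₁ ρ₂ : Mat d,
        ρ₁.PosSemidef → ρ₁.trace = 1 → ρ₂.PosSemidef → ρ₂.trace = 1 →
        pl ((t : ℂ) • ρ₁ + ((1 - t : ℝ) : ℂ) • ρ₂) = t * pl ρ₁ + (1 - t) * pl ρ₂)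

/-- The matrix representing the linear functional `L pl` via the trace pairing. -/
noncomputable def G (pl : Mat d → ℝ) : Mat d :=
  Matrix.of fun a b => L pl (Matrix.single b a 1)

include haff

lemma trace_mul_G (M : Mat d) : (M * G pl).trace = L pl M := by
  have h1 : (M * G pl).trace = ∑ a, ∑ b, M a b * L pl (Matrix.single a b 1) := by
    rw [Matrix.trace, Finset.sum_congr rfl]
    intro a _
    rw [Matrix.diag, Matrix.mul_apply]
    exact Finset.sum_congr rfl fun b _ => rfl
  rw [h1]
  have h2 : ∀ a b, M a b * L pl (Matrix.single a b 1)
      = L pl (Matrix.single a b (M a b)) := by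
    intro a b
    rw [← L_smul haff (M a b), Matrix.smul_single, smul_eq_mul, mul_one]
  simp_rw [h2]
  have h3 : ∑ a : Fin d, ∑ b : Fin d, L pl (Matrix.single a b (M a b))
      = ∑ a : Fin d, L pl (∑ b, Matrix.single a b (M a b)) :=
    Finset.sum_congr rfl fun a _ => (L_sum haff _ _).symm
  rw [h3, ← L_sum haff, ← Matrix.matrix_eq_sum_single]

omit haff in
lemma conjTranspose_stdBasis (a b : Fin d) :
    (Matrix.single a b (1:ℂ))ᴴ = Matrix.single b a 1 := by
  ext i j
  by_cases h1 : i = b <;> by_cases h2 : j = a <;>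
    simp [Matrix.conjTranspose_apply, Matrix.single, h1, h2, and_comm]

lemma G_hermitian : (G pl).IsHermitian := by
  ext i j
  rw [Matrix.conjTranspose_apply, G, Matrix.of_apply, Matrix.of_apply]
  rw [show star (L pl (Matrix.single i j 1)) = starRingEnd ℂ (L pl (Matrix.single i j 1)) from rfl]
  rw [← L_conj haff, conjTranspose_stdBasis]

omit haff in
lemma trace_vecMulVec_mul (v : Fin d → ℂ) (M : Mat d) :
    (vecMulVec v (star v) * M).trace = star v ⬝ᵥ M *ᵥ v := by
  simp only [Matrix.trace, Matrix.diag, Matrix.mul_apply, vecMulVec_apply, dotProduct,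
    mulVec, Pi.star_apply, Finset.mul_sum]
  rw [Finset.sum_comm]
  exact Finset.sum_congr rfl fun b _ => Finset.sum_congr rfl fun a _ => by ring

omit haff in
lemma vecMulVec_psd (v : Fin d → ℂ) : (vecMulVec v (star v)).PosSemidef := by
  refine PosSemidef.of_dotProduct_mulVec_nonneg ?_ ?_
  · ext i j
    simp [Matrix.conjTranspose_apply, vecMulVec_apply, mul_comm]
  · intro x
    have h : star x ⬝ᵥ (vecMulVec v (star v)) *ᵥ x
        = star (star v ⬝ᵥ x) * (star v ⬝ᵥ x) := by
      simp only [dotProduct, mulVec, vecMulVec_apply, Pi.star_apply, star_sum, star_mul',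
        star_star, Finset.mul_sum, Finset.sum_mul]
      rw [Finset.sum_comm]
      exact Finset.sum_congr rfl fun i _ => Finset.sum_congr rfl fun j _ => by ring
    rw [h]
    exact star_mul_self_nonneg _

omit haff in
lemma vecMulVec_trace (v : Fin d → ℂ) :
    (vecMulVec v (star v)).trace = ((∑ i, Complex.normSq (v i) : ℝ) : ℂ) := by
  rw [Matrix.trace]
  push_cast
  congr 1
  funext i
  rw [Matrix.diag, vecMulVec_apply, Pi.star_apply, Complex.star_def, Complex.mul_conj]

include haff in
lemma construct (hpos : ∀ ρ : Mat d, ρ.PosSemidef → ρ.trace = 1 → 0 ≤ pl ρ) :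
    ∃ Gm : Mat d, Gm.PosSemidef ∧
      ∀ ρ : Mat d, ρ.PosSemidef → ρ.trace = 1 → (ρ * Gm).trace = ((pl ρ : ℝ) : ℂ) := by
  refine ⟨G pl, PosSemidef.of_dotProduct_mulVec_nonneg (G_hermitian haff) ?_, ?_⟩
  · intro x
    rw [← trace_vecMulVec_mul, trace_mul_G haff, L_psd haff (vecMulVec_psd x)]
    exact Complex.zero_le_real.mpr (f_nonneg hpos (vecMulVec_psd x))
  · intro ρ hρ ht
    rw [trace_mul_G haff, L_psd haff hρ, f_density ht]

end G

/-- A matrix annihilated by all density matrices under the trace pairing is zero. -/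
lemma eq_zero_of_density {M : Mat d}
    (h : ∀ ρ : Mat d, ρ.PosSemidef → ρ.trace = 1 → (ρ * M).trace = 0) : M = 0 := by
  apply eq_zero_of_quadratic
  intro v
  rcases eq_or_ne v 0 with rfl | hv
  · simp
  have hex : ∃ i, v i ≠ 0 := by
    by_contra hno
    push_neg at hno
    exact hv (funext hno)
  obtain ⟨i, hi⟩ := hex
  have hc : 0 < ∑ i, Complex.normSq (v i) :=
    Finset.sum_pos' (fun j _ => Complex.normSq_nonneg _)
      ⟨i, Finset.mem_univ i, Complex.normSq_pos.mpr hi⟩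
  set c := ∑ i, Complex.normSq (v i) with hc_def
  have hpsd := psd_smul (vecMulVec_psd v) (inv_nonneg.mpr hc.le)
  have htr : (((c⁻¹ : ℝ) : ℂ) • vecMulVec v (star v)).trace = 1 := by
    rw [Matrix.trace_smul, smul_eq_mul, vecMulVec_trace, ← Complex.ofReal_mul,
      inv_mul_cancel₀ (ne_of_gt hc)]
    simp
  have h0 := h _ hpsd htr
  rw [Matrix.smul_mul, Matrix.trace_smul, smul_eq_mul, trace_vecMulVec_mul] at h0
  have hne : ((c⁻¹ : ℝ) : ℂ) ≠ 0 := by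
    simp only [ne_eq, Complex.ofReal_eq_zero, inv_eq_zero]
    exact ne_of_gt hc
  exact (mul_eq_zero.mp h0).resolve_left hne

end PNCaux

/-- If the statistics of a set of POVMs admit, for every density
matrix, a preparation noncontextual decomposition with an ontic distribution
`p(λ|ρ)` affine in `ρ` and response functions `p(a|x,λ)` independent of `ρ`,
then the set is jointly measurable. -/
theorem prep_noncontextual_implies_jointly_measurable
    {d : ℕ} {X A Λ : Type} [Fintype X] [Fintype A] [Fintype Λ]
    (Ameas : A → X → Matrix (Fin d) (Fin d) ℂ)
    (hApos : ∀ a x, (Ameas a x).PosSemidef) (hAsum : ∀ x, ∑ a, Ameas a x = 1)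
    (p : Λ → Matrix (Fin d) (Fin d) ℂ → ℝ)
    (q : A → X → Λ → ℝ)
    (hqpos : ∀ a x l, 0 ≤ q a x l) (hqsum : ∀ x l, ∑ a, q a x l = 1)
    (hprange : ∀ l ρ, ρ.PosSemidef → ρ.trace = 1 → 0 ≤ p l ρ ∧ p l ρ ≤ 1)
    (hpsum : ∀ ρ, ρ.PosSemidef → ρ.trace = 1 → ∑ l, p l ρ = 1)
    (hpaff : ∀ l, ∀ t : ℝ, 0 ≤ t → t ≤ 1 →
      ∀ ρ₁ ρ₂ : Matrix (Fin d) (Fin d) ℂ,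
        ρ₁.PosSemidef → ρ₁.trace = 1 → ρ₂.PosSemidef → ρ₂.trace = 1 →
        p l ((t : ℂ) • ρ₁ + ((1 - t : ℝ) : ℂ) • ρ₂) = t * p l ρ₁ + (1 - t) * p l ρ₂)
    (hstat : ∀ ρ : Matrix (Fin d) (Fin d) ℂ, ρ.PosSemidef → ρ.trace = 1 →
      ∀ a x, (ρ * Ameas a x).trace = ((∑ l, p l ρ * q a x l : ℝ) : ℂ)) :
    ∃ G : Λ → Matrix (Fin d) (Fin d) ℂ,
      (∀ l, (G l).PosSemidef) ∧ (∑ l, G l = 1) ∧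
      ∀ a x, Ameas a x = ∑ l, (q a x l : ℂ) • G l := by
  classical
  have hG : ∀ l : Λ, ∃ Gm : Matrix (Fin d) (Fin d) ℂ, Gm.PosSemidef ∧
      ∀ ρ : Matrix (Fin d) (Fin d) ℂ, ρ.PosSemidef → ρ.trace = 1 →
        (ρ * Gm).trace = ((p l ρ : ℝ) : ℂ) :=
    fun l => PNCaux.construct (hpaff l) (fun ρ hρ ht => (hprange l ρ hρ ht).1)
  choose G hGspec using hG
  refine ⟨G, fun l => (hGspec l).1, ?_, ?_⟩
  · have hz : (∑ l, G l) - 1 = 0 := by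
      apply PNCaux.eq_zero_of_density
      intro ρ hρ ht
      rw [Matrix.mul_sub, Matrix.mul_one, Matrix.trace_sub, Matrix.mul_sum, Matrix.trace_sum,
        Finset.sum_congr rfl (fun l _ => (hGspec l).2 ρ hρ ht), ← Complex.ofReal_sum,
        hpsum ρ hρ ht, ht]
      simp
    rwa [sub_eq_zero] at hz
  · intro a x
    have hz : Ameas a x - ∑ l, (q a x l : ℂ) • G l = 0 := by
      apply PNCaux.eq_zero_of_density
      intro ρ hρ ht
      rw [Matrix.mul_sub, Matrix.trace_sub, hstat ρ hρ ht a x, Matrix.mul_sum, Matrix.trace_sum]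
      have hterm : ∀ l, (ρ * ((q a x l : ℂ) • G l)).trace = (q a x l : ℂ) * ((p l ρ : ℝ) : ℂ) := by
        intro l
        rw [mul_smul_comm, Matrix.trace_smul, smul_eq_mul, (hGspec l).2 ρ hρ ht]
      rw [Finset.sum_congr rfl (fun l _ => hterm l), sub_eq_zero]
      push_cast
      exact Finset.sum_congr rfl fun l _ => by ring
    rwa [sub_eq_zero] at hz
end

section
/- Let $p$ be a map assigning to every POVM $\{M_b\}_{b=1}^k$ on $\mathbb{C}^d$ (for any finite $k$) a probability distribution $p(b|M)$ over outcomes, such that $p$ is consistent with operations on POVMs: for any POVMs $M, N$ and $t\in[0,1]$, $p(b| tM + (1-t)N) = t\, p(b|M) + (1-t)\, p(b|N)$, and $p$ respects coarse-graining and relabelings of outcomes (the value $p(b|M)$ depends only on the effect $M_b$). Then, if $d \ge 2$, there exists a unique density matrix $\rho$ such that $p(b|M) = \mathrm{Tr}[\rho M_b]$ for all POVMs $M$ and outcomes $b$. -/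
open Matrix BigOperators ComplexOrder

variable {d : ℕ}
abbrev Mat (d : ℕ) := Matrix (Fin d) (Fin d) ℂ


lemma herm_real_smul {A : Mat d} (hA : A.IsHermitian) (r : ℝ) :
    (((r : ℝ) : ℂ) • A).IsHermitian := by
  have : (((r : ℝ) : ℂ) • A)ᴴ = ((r : ℝ) : ℂ) • A := by
    rw [conjTranspose_smul, hA.eq]
    congr 1
    simp [Complex.star_def, Complex.conj_ofReal]
  exact this

lemma psd_smul {A : Mat d} (hA : A.PosSemidef) {r : ℝ} (hr : 0 ≤ r) :
    (((r : ℝ) : ℂ) • A).PosSemidef := by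
  refine .of_dotProduct_mulVec_nonneg (herm_real_smul hA.1 r) fun x => ?_
  rw [smul_mulVec, dotProduct_smul]
  exact smul_nonneg (by exact_mod_cast Complex.zero_le_real.mpr hr) (hA.dotProduct_mulVec_nonneg x)

lemma psd_sum {ι : Type*} (s : Finset ι) (g : ι → Mat d)
    (h : ∀ i ∈ s, (g i).PosSemidef) : (∑ i ∈ s, g i).PosSemidef := by
  classical
  induction s using Finset.induction_on with
  | empty => simpa using (Matrix.PosSemidef.zero (n := Fin d) (R := ℂ))
  | insert a t hx ih =>
    rw [Finset.sum_insert hx]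
    exact (h a (Finset.mem_insert_self a t)).add (ih fun i hi => h i (Finset.mem_insert_of_mem hi))

lemma smul_one_sub_herm_psd {A : Mat d} (hA : A.IsHermitian) {c : ℝ}
    (h : ∀ i, hA.eigenvalues i ≤ c) : (((c : ℝ) : ℂ) • 1 - A).PosSemidef := by
  have key : ((c : ℂ) • 1 - A) =
      (hA.eigenvectorUnitary : Mat d) *
        diagonal (fun i => ((c - hA.eigenvalues i : ℝ) : ℂ)) *
        (hA.eigenvectorUnitary : Mat d)ᴴ := by
    have hdiag : diagonal (fun i => ((c - hA.eigenvalues i : ℝ) : ℂ))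
        = (c : ℂ) • 1 - diagonal (RCLike.ofReal ∘ hA.eigenvalues) := by
      rw [smul_one_eq_diagonal, diagonal_sub]
      congr 1; ext i; push_cast; rfl
    rw [hdiag, Matrix.mul_sub, Matrix.sub_mul, Matrix.mul_smul, Matrix.mul_one,
      Matrix.smul_mul]
    have hu : (hA.eigenvectorUnitary : Mat d) * (hA.eigenvectorUnitary : Mat d)ᴴ = 1 := by
      rw [← Matrix.star_eq_conjTranspose]
      exact Unitary.coe_mul_star_self _
    rw [hu, smul_one_eq_diagonal]
    congr 1
    rw [← Matrix.star_eq_conjTranspose]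
    exact hA.spectral_theorem
  rw [key]
  refine (posSemidef_diagonal_iff.mpr fun i => ?_).mul_mul_conjTranspose_same _
  exact_mod_cast Complex.zero_le_real.mpr (by linarith [h i])

noncomputable def posP {A : Mat d} (hA : A.IsHermitian) : Mat d :=
  (hA.eigenvectorUnitary : Mat d) *
    diagonal (fun i => ((max (hA.eigenvalues i) 0 : ℝ) : ℂ)) *
    (hA.eigenvectorUnitary : Mat d)ᴴ

noncomputable def negP {A : Mat d} (hA : A.IsHermitian) : Mat d :=
  (hA.eigenvectorUnitary : Mat d) *
    diagonal (fun i => ((max (- hA.eigenvalues i) 0 : ℝ) : ℂ)) *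
    (hA.eigenvectorUnitary : Mat d)ᴴ

lemma posP_psd {A : Mat d} (hA : A.IsHermitian) : (posP hA).PosSemidef :=
  (posSemidef_diagonal_iff.mpr fun i =>
    by exact_mod_cast Complex.zero_le_real.mpr (le_max_right _ _)).mul_mul_conjTranspose_same _

lemma negP_psd {A : Mat d} (hA : A.IsHermitian) : (negP hA).PosSemidef :=
  (posSemidef_diagonal_iff.mpr fun i =>
    by exact_mod_cast Complex.zero_le_real.mpr (le_max_right _ _)).mul_mul_conjTranspose_same _

lemma posP_sub_negP {A : Mat d} (hA : A.IsHermitian) : posP hA - negP hA = A := by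
  rw [posP, negP, ← Matrix.sub_mul, ← Matrix.mul_sub, diagonal_sub]
  have key : (fun i => ((max (hA.eigenvalues i) 0 : ℝ) : ℂ) - ((max (- hA.eigenvalues i) 0 : ℝ) : ℂ))
      = RCLike.ofReal ∘ hA.eigenvalues := by
    funext i
    have h1 : max (hA.eigenvalues i) 0 - max (- hA.eigenvalues i) 0 = hA.eigenvalues i := by
      rcases le_total (hA.eigenvalues i) 0 with h | h
      · rw [max_eq_right h, max_eq_left (by linarith)]; ring
      · rw [max_eq_left h, max_eq_right (by linarith)]; ring
    show ((max (hA.eigenvalues i) 0 : ℝ) : ℂ) - ((max (- hA.eigenvalues i) 0 : ℝ) : ℂ) = ((hA.eigenvalues i : ℝ) : ℂ)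
    rw [← Complex.ofReal_sub, h1]
  rw [key, ← Matrix.star_eq_conjTranspose]
  exact hA.spectral_theorem.symm

noncomputable def ReM (A : Mat d) : Mat d := (1/2 : ℂ) • (A + Aᴴ)
noncomputable def ImM (A : Mat d) : Mat d := (Complex.I/2) • (Aᴴ - A)

lemma ReM_herm (A : Mat d) : (ReM A).IsHermitian := by
  show (ReM A)ᴴ = ReM A
  rw [ReM, conjTranspose_smul, conjTranspose_add, conjTranspose_conjTranspose]
  congr 1
  · simp [Complex.star_def]
  · exact add_comm _ _

lemma ImM_herm (A : Mat d) : (ImM A).IsHermitian := by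
  show (ImM A)ᴴ = ImM A
  rw [ImM, conjTranspose_smul, conjTranspose_sub, conjTranspose_conjTranspose]
  have : star (Complex.I / 2) = - (Complex.I / 2) := by
    simp [Complex.star_def, Complex.ext_iff]
    norm_num
  rw [this, neg_smul, ← smul_neg, neg_sub]

lemma ReM_add_I_smul_ImM (A : Mat d) : ReM A + Complex.I • ImM A = A := by
  rw [ReM, ImM, smul_smul]
  have : Complex.I * (Complex.I / 2) = - (1/2 : ℂ) := by
    rw [mul_div_assoc', Complex.I_mul_I]; ring
  rw [this, neg_smul, smul_sub, smul_add]
  ext i j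
  simp only [Matrix.add_apply, Matrix.sub_apply, Matrix.neg_apply, Matrix.smul_apply, smul_eq_mul]
  ring

lemma ReM_eq_of_herm {A : Mat d} (hA : A.IsHermitian) : ReM A = A := by
  rw [ReM, hA.eq]
  ext i j
  simp only [Matrix.smul_apply, Matrix.add_apply, smul_eq_mul]
  ring

lemma ImM_eq_of_herm {A : Mat d} (hA : A.IsHermitian) : ImM A = 0 := by
  rw [ImM, hA.eq, sub_self, smul_zero]

lemma ReM_add (A B : Mat d) : ReM (A + B) = ReM A + ReM B := by
  rw [ReM, ReM, ReM, conjTranspose_add, ← smul_add]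
  congr 1
  abel

lemma ImM_add (A B : Mat d) : ImM (A + B) = ImM A + ImM B := by
  rw [ImM, ImM, ImM, conjTranspose_add, ← smul_add]
  congr 1
  abel

lemma ReM_real_smul (r : ℝ) (A : Mat d) : ReM (((r:ℝ):ℂ) • A) = ((r:ℝ):ℂ) • ReM A := by
  rw [ReM, ReM, conjTranspose_smul, smul_comm]
  congr 2
  simp [Complex.star_def, Complex.conj_ofReal]

lemma ImM_real_smul (r : ℝ) (A : Mat d) : ImM (((r:ℝ):ℂ) • A) = ((r:ℝ):ℂ) • ImM A := by
  rw [ImM, ImM, conjTranspose_smul,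
    show (star ((r:ℝ):ℂ)) = ((r:ℝ):ℂ) by simp [Complex.star_def, Complex.conj_ofReal],
    ← smul_sub, smul_comm]

lemma ReM_I_smul (A : Mat d) : ReM (Complex.I • A) = - ImM A := by
  rw [ReM, ImM, conjTranspose_smul]
  have : star Complex.I = - Complex.I := by simp
  rw [this, neg_smul, ← sub_eq_add_neg, ← smul_sub, smul_smul]
  rw [show (1/2 : ℂ) * Complex.I = Complex.I / 2 by ring, ← smul_neg, neg_sub]

lemma ImM_I_smul (A : Mat d) : ImM (Complex.I • A) = ReM A := by
  rw [ImM, ReM, conjTranspose_smul]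
  have : star Complex.I = - Complex.I := by simp
  rw [this, neg_smul, ← smul_neg, ← smul_sub, smul_smul]
  have h2 : Complex.I / 2 * Complex.I = - (1/2 : ℂ) := by
    rw [div_mul_eq_mul_div, Complex.I_mul_I]; ring
  rw [h2, neg_smul, ← smul_neg, neg_sub, sub_neg_eq_add, add_comm]

lemma ReM_conjT (A : Mat d) : ReM (Aᴴ) = ReM A := by
  rw [ReM, ReM, conjTranspose_conjTranspose, add_comm]

lemma ImM_conjT (A : Mat d) : ImM (Aᴴ) = - ImM A := by
  rw [ImM, ImM, conjTranspose_conjTranspose, ← smul_neg, neg_sub]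

lemma herm_trace_eq {A : Mat d} (hA : A.IsHermitian) :
    A.trace = ((∑ i, hA.eigenvalues i : ℝ) : ℂ) := by
  conv_lhs => rw [hA.spectral_theorem]
  rw [Unitary.conjStarAlgAut_apply, Matrix.trace_mul_cycle, Unitary.coe_star_mul_self, one_mul, Matrix.trace_diagonal]
  push_cast
  rfl

lemma psd_trace_re_nonneg {P : Mat d} (hP : P.PosSemidef) : 0 ≤ P.trace.re := by
  have := herm_trace_eq hP.1
  rw [this]
  simp only [Complex.ofReal_re]
  exact Finset.sum_nonneg fun i _ => hP.eigenvalues_nonneg i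

lemma psd_eigenvalue_le_trace {P : Mat d} (hP : P.PosSemidef) (i : Fin d) :
    hP.1.eigenvalues i ≤ P.trace.re := by
  have := herm_trace_eq hP.1
  rw [this]
  simp only [Complex.ofReal_re]
  exact Finset.single_le_sum (fun j _ => hP.eigenvalues_nonneg j) (Finset.mem_univ i)

/-- An effect: `0 ≤ E ≤ 1`. -/
def IsEffect (E : Mat d) : Prop := E.PosSemidef ∧ ((1 : Mat d) - E).PosSemidef

lemma smul_one_sub_psd {P : Mat d} (hP : P.PosSemidef) {s : ℝ} (hs : P.trace.re < s) :
    (((s : ℝ) : ℂ) • 1 - P).PosSemidef :=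
  smul_one_sub_herm_psd hP.1 (fun i => le_of_lt (lt_of_le_of_lt (psd_eigenvalue_le_trace hP i) hs))

lemma eff_of_scale {P : Mat d} (hP : P.PosSemidef) {s : ℝ} (hs : P.trace.re < s) :
    IsEffect ((((s⁻¹ : ℝ)) : ℂ) • P) := by
  have hs0 : 0 < s := lt_of_le_of_lt (psd_trace_re_nonneg hP) hs
  constructor
  · refine .of_dotProduct_mulVec_nonneg ?_ fun x => ?_
    · have : (((s⁻¹ : ℝ) : ℂ) • P)ᴴ = ((s⁻¹ : ℝ) : ℂ) • P := by
        rw [conjTranspose_smul, hP.1.eq]; congr 1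
        simp [Complex.star_def, Complex.conj_ofReal]
      exact this
    · rw [smul_mulVec, dotProduct_smul]
      exact smul_nonneg (by exact_mod_cast Complex.zero_le_real.mpr (le_of_lt (inv_pos.mpr hs0))) (hP.dotProduct_mulVec_nonneg x)
  · have h1 : (1 : Mat d) - ((s⁻¹ : ℝ) : ℂ) • P
        = ((s⁻¹ : ℝ) : ℂ) • (((s : ℝ) : ℂ) • 1 - P) := by
      rw [smul_sub, smul_smul]
      congr 2
      push_cast
      field_simp
      rw [one_smul]
    rw [h1]
    have hpsd := smul_one_sub_psd hP hs
    refine .of_dotProduct_mulVec_nonneg ?_ fun x => ?_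
    · have : (((s⁻¹ : ℝ) : ℂ) • (((s:ℝ):ℂ) • 1 - P))ᴴ = ((s⁻¹ : ℝ) : ℂ) • (((s:ℝ):ℂ) • 1 - P) := by
        rw [conjTranspose_smul, hpsd.1.eq]; congr 1
        simp [Complex.star_def, Complex.conj_ofReal]
      exact this
    · rw [smul_mulVec, dotProduct_smul]
      exact smul_nonneg (by exact_mod_cast Complex.zero_le_real.mpr (le_of_lt (inv_pos.mpr hs0))) (hpsd.dotProduct_mulVec_nonneg x)
structure FrameFn (d : ℕ) (f : Matrix (Fin d) (Fin d) ℂ → ℝ) : Prop where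
  hscale : ∀ E, IsEffect E → ∀ t : ℝ, 0 ≤ t → t ≤ 1 → f (((t:ℝ):ℂ) • E) = t * f E
  hadd : ∀ E₁ E₂, IsEffect E₁ → IsEffect E₂ → ((1 : Mat d) - (E₁ + E₂)).PosSemidef →
    f (E₁ + E₂) = f E₁ + f E₂
  hnn : ∀ E, IsEffect E → 0 ≤ f E
  hone : f 1 = 1

variable {f : Mat d → ℝ}

lemma eff_one : IsEffect (1 : Mat d) := ⟨Matrix.PosSemidef.one, by rw [sub_self]; exact .zero⟩

lemma f_zero (hf : FrameFn d f) : f 0 = 0 := by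
  have := hf.hscale 1 eff_one 0 le_rfl zero_le_one
  simpa [hf.hone] using this

lemma scale_inv (hf : FrameFn d f) (P : Mat d) {s t : ℝ} (hs : 0 < s) (ht : 0 < t)
    (hes : IsEffect ((((s⁻¹:ℝ)):ℂ) • P)) (het : IsEffect ((((t⁻¹:ℝ)):ℂ) • P)) :
    s * f ((((s⁻¹:ℝ)):ℂ) • P) = t * f ((((t⁻¹:ℝ)):ℂ) • P) := by
  have key : ∀ s t : ℝ, 0 < s → 0 < t → s ≤ t → IsEffect ((((s⁻¹:ℝ)):ℂ) • P) →
      t * f ((((t⁻¹:ℝ)):ℂ) • P) = s * f ((((s⁻¹:ℝ)):ℂ) • P) := by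
    intro s t hs ht hst hes
    have h1 : (((t⁻¹:ℝ)):ℂ) • P = (((s/t : ℝ)):ℂ) • ((((s⁻¹:ℝ)):ℂ) • P) := by
      rw [smul_smul, ← Complex.ofReal_mul]
      congr 2
      field_simp
    rw [h1, hf.hscale _ hes (s/t) (by positivity) (div_le_one_of_le₀ hst (le_of_lt ht))]
    field_simp
  rcases le_total s t with h | h
  · exact (key s t hs ht h hes).symm
  · exact key t s ht hs h het

noncomputable def gf (f : Mat d → ℝ) (P : Mat d) : ℝ :=
  (P.trace.re + 1) * f ((((P.trace.re + 1)⁻¹ : ℝ) : ℂ) • P)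

-- placeholders for lemmas proven elsewhere

lemma sc_pos {P : Mat d} (hP : P.PosSemidef) : 0 < P.trace.re + 1 := by
  linarith [psd_trace_re_nonneg hP]

lemma gf_eq_of_scale (hf : FrameFn d f) {P : Mat d} (hP : P.PosSemidef) {s : ℝ}
    (hs : 0 < s) (hes : IsEffect ((((s⁻¹:ℝ)):ℂ) • P)) :
    gf f P = s * f ((((s⁻¹:ℝ)):ℂ) • P) := by
  rw [gf]
  exact scale_inv hf P (sc_pos hP) hs (eff_of_scale hP (by linarith)) hes

lemma gf_eff (hf : FrameFn d f) {P : Mat d} (hP : IsEffect P) : gf f P = f P := by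
  have := gf_eq_of_scale hf hP.1 one_pos (by simpa using hP)
  simpa using this

lemma gf_zero (hf : FrameFn d f) : gf f (0 : Mat d) = 0 := by
  have h0 : IsEffect (0 : Mat d) := ⟨.zero, by rw [sub_zero]; exact .one⟩
  rw [gf_eff hf h0, f_zero hf]

lemma gf_nonneg (hf : FrameFn d f) {P : Mat d} (hP : P.PosSemidef) : 0 ≤ gf f P := by
  rw [gf]
  have h1 : P.trace.re < P.trace.re + 1 := by linarith
  exact mul_nonneg (le_of_lt (sc_pos hP)) (hf.hnn _ (eff_of_scale hP h1))

lemma gf_add (hf : FrameFn d f) {P Q : Mat d} (hP : P.PosSemidef) (hQ : Q.PosSemidef) :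
    gf f (P + Q) = gf f P + gf f Q := by
  set s : ℝ := P.trace.re + Q.trace.re + 2 with hs
  have htr : (P + Q).trace.re = P.trace.re + Q.trace.re := by
    rw [Matrix.trace_add, Complex.add_re]
  have hnP := psd_trace_re_nonneg hP
  have hnQ := psd_trace_re_nonneg hQ
  have hPs : P.trace.re < s := by rw [hs]; linarith
  have hQs : Q.trace.re < s := by rw [hs]; linarith
  have hPQs : (P + Q).trace.re < s := by rw [htr, hs]; linarith
  have hs0 : 0 < s := by rw [hs]; linarith
  have hePQ := eff_of_scale (hP.add hQ) hPQs
  have heP := eff_of_scale hP hPs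
  have heQ := eff_of_scale hQ hQs
  rw [gf_eq_of_scale hf (hP.add hQ) hs0 hePQ, gf_eq_of_scale hf hP hs0 heP,
    gf_eq_of_scale hf hQ hs0 heQ]
  have hsplit : ((((s⁻¹:ℝ)):ℂ) • (P + Q)) = (((s⁻¹:ℝ)):ℂ) • P + (((s⁻¹:ℝ)):ℂ) • Q := smul_add _ _ _
  rw [hsplit, hf.hadd _ _ heP heQ (by rw [← hsplit]; exact hePQ.2), mul_add]

lemma gf_smul (hf : FrameFn d f) {P : Mat d} (hP : P.PosSemidef) {r : ℝ} (hr : 0 ≤ r) :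
    gf f (((r:ℝ):ℂ) • P) = r * gf f P := by
  rcases eq_or_lt_of_le hr with h | h
  · rw [← h]
    simp only [Complex.ofReal_zero, zero_smul, zero_mul]
    exact gf_zero hf
  · set s : ℝ := r * (P.trace.re + 1) with hs
    have htr : (((r:ℝ):ℂ) • P).trace.re = r * P.trace.re := by
      rw [Matrix.trace_smul, smul_eq_mul, Complex.re_ofReal_mul]
    have hrP : (((r:ℝ):ℂ) • P).PosSemidef := by
      refine .of_dotProduct_mulVec_nonneg ?_ fun x => ?_
      · have : (((r:ℝ):ℂ) • P)ᴴ = ((r:ℝ):ℂ) • P := by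
          rw [conjTranspose_smul, hP.1.eq]
          congr 1
          simp [Complex.star_def, Complex.conj_ofReal]
        exact this
      · rw [smul_mulVec, dotProduct_smul]
        exact smul_nonneg (by exact_mod_cast Complex.zero_le_real.mpr hr) (hP.dotProduct_mulVec_nonneg x)
    have hs0 : 0 < s := by rw [hs]; exact mul_pos h (sc_pos hP)
    have hsb : (((r:ℝ):ℂ) • P).trace.re < s := by
      rw [htr, hs]
      have := psd_trace_re_nonneg hP
      nlinarith
    have collapse : (((s⁻¹:ℝ)):ℂ) • (((r:ℝ):ℂ) • P) = ((((P.trace.re + 1)⁻¹:ℝ)):ℂ) • P := by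
      rw [smul_smul, ← Complex.ofReal_mul]
      congr 2
      rw [hs, mul_inv]
      have hne : (P.trace.re + 1) ≠ 0 := ne_of_gt (sc_pos hP)
      have hrne : r ≠ 0 := ne_of_gt h
      field_simp
    rw [gf_eq_of_scale hf hrP hs0 (by rw [collapse]; exact eff_of_scale hP (by linarith)), collapse,
      hs, gf]
    ring
noncomputable def Lf (f : Mat d → ℝ) (A : Mat d) : ℝ :=
  if h : A.IsHermitian then gf f (posP h) - gf f (negP h) else 0

variable {f : Mat d → ℝ}

lemma Lf_eq_diff (hf : FrameFn d f) {A : Mat d} (hA : A.IsHermitian) {X Y : Mat d}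
    (hX : X.PosSemidef) (hY : Y.PosSemidef) (hXY : X - Y = A) :
    Lf f A = gf f X - gf f Y := by
  rw [Lf, dif_pos hA]
  have h1 : posP hA + Y = X + negP hA := by
    have h2 : posP hA - negP hA = X - Y := by rw [posP_sub_negP hA, hXY]
    exact sub_eq_sub_iff_add_eq_add.mp h2
  have h2 : gf f (posP hA) + gf f Y = gf f X + gf f (negP hA) := by
    rw [← gf_add hf (posP_psd hA) hY, ← gf_add hf hX (negP_psd hA), h1]
  linarith

lemma Lf_psd (hf : FrameFn d f) {P : Mat d} (hP : P.PosSemidef) : Lf f P = gf f P := by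
  rw [Lf_eq_diff hf hP.1 hP Matrix.PosSemidef.zero (sub_zero P), gf_zero hf, sub_zero]

lemma Lf_add (hf : FrameFn d f) {A B : Mat d} (hA : A.IsHermitian) (hB : B.IsHermitian) :
    Lf f (A + B) = Lf f A + Lf f B := by
  have h1 : (posP hA + posP hB) - (negP hA + negP hB) = A + B := by
    have := posP_sub_negP hA
    have := posP_sub_negP hB
    linear_combination (norm := abel) posP_sub_negP hA + posP_sub_negP hB
  rw [Lf_eq_diff hf (hA.add hB) ((posP_psd hA).add (posP_psd hB)) ((negP_psd hA).add (negP_psd hB)) h1,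
    gf_add hf (posP_psd hA) (posP_psd hB), gf_add hf (negP_psd hA) (negP_psd hB),
    Lf, dif_pos hA, Lf, dif_pos hB]
  ring

lemma Lf_zero (hf : FrameFn d f) : Lf f (0 : Mat d) = 0 := by
  rw [Lf_psd hf Matrix.PosSemidef.zero, gf_zero hf]

lemma Lf_smul (hf : FrameFn d f) {A : Mat d} (hA : A.IsHermitian) (r : ℝ) :
    Lf f (((r:ℝ):ℂ) • A) = r * Lf f A := by
  have hLA : Lf f A = gf f (posP hA) - gf f (negP hA) := by rw [Lf, dif_pos hA]
  rcases le_total 0 r with hr | hr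
  · have h1 : (((r:ℝ):ℂ) • posP hA) - (((r:ℝ):ℂ) • negP hA) = ((r:ℝ):ℂ) • A := by
      rw [← smul_sub, posP_sub_negP]
    rw [Lf_eq_diff hf (herm_real_smul hA r) (psd_smul (posP_psd hA) hr) (psd_smul (negP_psd hA) hr) h1,
      gf_smul hf (posP_psd hA) hr, gf_smul hf (negP_psd hA) hr, hLA]
    ring
  · have hr' : 0 ≤ -r := by linarith
    have h1 : ((((-r):ℝ):ℂ) • negP hA) - ((((-r):ℝ):ℂ) • posP hA) = ((r:ℝ):ℂ) • A := by
      rw [← smul_sub]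
      calc ((((-r):ℝ):ℂ)) • (negP hA - posP hA)
          = ((r:ℝ):ℂ) • (posP hA - negP hA) := by
            push_cast
            rw [neg_smul, ← smul_neg, neg_sub]
        _ = ((r:ℝ):ℂ) • A := by rw [posP_sub_negP hA]
    rw [Lf_eq_diff hf (herm_real_smul hA r) (psd_smul (negP_psd hA) hr') (psd_smul (posP_psd hA) hr') h1,
      gf_smul hf (negP_psd hA) hr', gf_smul hf (posP_psd hA) hr', hLA]
    ring

noncomputable def Lc (f : Mat d → ℝ) (A : Mat d) : ℂ :=
  ((Lf f (ReM A) : ℝ) : ℂ) + Complex.I * ((Lf f (ImM A) : ℝ) : ℂ)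

lemma Lc_add (hf : FrameFn d f) (A B : Mat d) : Lc f (A + B) = Lc f A + Lc f B := by
  rw [Lc, Lc, Lc, ReM_add, ImM_add, Lf_add hf (ReM_herm A) (ReM_herm B),
    Lf_add hf (ImM_herm A) (ImM_herm B)]
  push_cast
  ring

lemma Lc_real_smul (hf : FrameFn d f) (r : ℝ) (A : Mat d) :
    Lc f (((r:ℝ):ℂ) • A) = ((r:ℝ):ℂ) * Lc f A := by
  rw [Lc, Lc, ReM_real_smul, ImM_real_smul, Lf_smul hf (ReM_herm A), Lf_smul hf (ImM_herm A)]
  push_cast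
  ring

lemma Lc_I_smul (hf : FrameFn d f) (A : Mat d) :
    Lc f (Complex.I • A) = Complex.I * Lc f A := by
  rw [Lc, Lc, ReM_I_smul, ImM_I_smul]
  have hneg : Lf f (- ImM A) = - Lf f (ImM A) := by
    have := Lf_smul hf (ImM_herm A) (-1)
    push_cast at this
    simpa using this
  rw [hneg]
  push_cast
  have : Complex.I * Complex.I = -1 := Complex.I_mul_I
  ring_nf
  rw [Complex.I_sq]
  ring

lemma Lc_smul (hf : FrameFn d f) (z : ℂ) (A : Mat d) : Lc f (z • A) = z * Lc f A := by
  have hz : z • A = ((z.re:ℝ):ℂ) • A + Complex.I • (((z.im:ℝ):ℂ) • A) := by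
    rw [smul_smul, ← add_smul]
    congr 1
    rw [mul_comm]
    exact (Complex.re_add_im z).symm
  rw [hz, Lc_add hf, Lc_real_smul hf, Lc_I_smul hf, Lc_real_smul hf]
  have : (z.re : ℂ) + Complex.I * (z.im : ℂ) = z := by
    rw [mul_comm]
    exact Complex.re_add_im z
  linear_combination (Lc f A) * this
lemma Lc_herm (hf : FrameFn d f) {A : Mat d} (hA : A.IsHermitian) :
    Lc f A = ((Lf f A : ℝ) : ℂ) := by
  rw [Lc, ReM_eq_of_herm hA, ImM_eq_of_herm hA, Lf_zero hf]
  push_cast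
  ring

lemma Lc_conjT (hf : FrameFn d f) (A : Mat d) :
    Lc f (Aᴴ) = starRingEnd ℂ (Lc f A) := by
  rw [Lc, Lc, ReM_conjT, ImM_conjT]
  have hneg : Lf f (- ImM A) = - Lf f (ImM A) := by
    have := Lf_smul hf (ImM_herm A) (-1)
    push_cast at this
    simpa using this
  rw [hneg, map_add, _root_.map_mul]
  simp [Complex.conj_ofReal, Complex.conj_I]

noncomputable def LcHom (f : Mat d → ℝ) (hf : FrameFn d f) : Mat d →ₗ[ℂ] ℂ where
  toFun := Lc f
  map_add' := Lc_add hf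
  map_smul' := fun z A => by simpa using Lc_smul hf z A

noncomputable def rhoM (f : Mat d → ℝ) : Mat d :=
  Matrix.of fun i j => Lc f (single j i 1)

lemma trace_rhoM_mul (hf : FrameFn d f) (B : Mat d) :
    (rhoM f * B).trace = Lc f B := by
  have hexp : Lc f B = ∑ a : Fin d, ∑ b : Fin d, B a b * Lc f (single a b 1) := by
    have h0 : Lc f B = LcHom f hf B := rfl
    conv_lhs => rw [h0, matrix_eq_sum_single B]
    rw [map_sum]
    refine Finset.sum_congr rfl fun a _ => ?_
    rw [map_sum]
    refine Finset.sum_congr rfl fun b _ => ?_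
    rw [show single a b (B a b) = B a b • single a b (1:ℂ) by
      rw [smul_single, smul_eq_mul, mul_one], _root_.map_smul]
    rfl
  rw [hexp, Matrix.trace]
  rw [Finset.sum_comm]
  refine Finset.sum_congr rfl fun a _ => ?_
  simp only [Matrix.diag_apply, Matrix.mul_apply, rhoM, Matrix.of_apply]
  refine Finset.sum_congr rfl fun b _ => ?_
  ring
lemma rhoM_herm (hf : FrameFn d f) : (rhoM f).IsHermitian := by
  show (rhoM f)ᴴ = rhoM f
  ext i j
  show starRingEnd ℂ (rhoM f j i) = rhoM f i j
  show starRingEnd ℂ (Lc f (single i j 1)) = Lc f (single j i 1)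
  rw [← Lc_conjT hf]
  congr 1
  ext a b
  simp [single, Matrix.conjTranspose_apply, and_comm]

lemma vecMulVec_psd (x : Fin d → ℂ) : (vecMulVec x (star x)).PosSemidef := by
  refine .of_dotProduct_mulVec_nonneg ?_ ?_
  · show (vecMulVec x (star x))ᴴ = _
    ext i j
    simp [vecMulVec_apply, Matrix.conjTranspose_apply, mul_comm]
  · intro y
    have : star y ⬝ᵥ (vecMulVec x (star x)) *ᵥ y
        = (star y ⬝ᵥ x) * (star x ⬝ᵥ y) := by
      simp only [dotProduct, mulVec, vecMulVec_apply, Finset.mul_sum, Finset.sum_mul]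
      rw [Finset.sum_comm]
      refine Finset.sum_congr rfl fun i _ => Finset.sum_congr rfl fun j _ => ?_
      simp only [Pi.star_apply]
      ring
    rw [this]
    have hsy : star y ⬝ᵥ x = starRingEnd ℂ (star x ⬝ᵥ y) := by
      simp only [dotProduct, map_sum, Pi.star_apply]
      refine Finset.sum_congr rfl fun i _ => ?_
      simp [Complex.star_def, mul_comm]
    rw [hsy]
    exact star_mul_self_nonneg _

lemma trace_mul_vecMulVec (ρ : Mat d) (x : Fin d → ℂ) :
    (ρ * vecMulVec x (star x)).trace = star x ⬝ᵥ ρ *ᵥ x := by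
  simp only [Matrix.trace, Matrix.diag_apply, Matrix.mul_apply, vecMulVec_apply,
    dotProduct, mulVec, Pi.star_apply]
  refine Finset.sum_congr rfl fun i _ => ?_
  rw [Finset.mul_sum]
  refine Finset.sum_congr rfl fun j _ => ?_
  ring

lemma rhoM_psd (hf : FrameFn d f) : (rhoM f).PosSemidef := by
  refine .of_dotProduct_mulVec_nonneg (rhoM_herm hf) fun x => ?_
  rw [← trace_mul_vecMulVec, trace_rhoM_mul hf, Lc_herm hf (vecMulVec_psd x).1,
    Lf_psd hf (vecMulVec_psd x)]
  exact_mod_cast Complex.zero_le_real.mpr (gf_nonneg hf (vecMulVec_psd x))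

lemma rhoM_trace (hf : FrameFn d f) : (rhoM f).trace = 1 := by
  have h1 : (rhoM f * 1).trace = Lc f 1 := trace_rhoM_mul hf 1
  rw [mul_one] at h1
  rw [h1, Lc_herm hf isHermitian_one, Lf_psd hf Matrix.PosSemidef.one, gf_eff hf eff_one, hf.hone]
  norm_num

lemma rhoM_eff (hf : FrameFn d f) {E : Mat d} (hE : IsEffect E) :
    (rhoM f * E).trace = ((f E : ℝ) : ℂ) := by
  rw [trace_rhoM_mul hf, Lc_herm hf hE.1.1, Lf_psd hf hE.1, gf_eff hf hE]
lemma herm_trace_mul_self_zero {σ : Mat d} (hσ : σ.IsHermitian)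
    (h : (σ * σ).trace = 0) : σ = 0 := by
  have h1 : (σ * σ).trace = ((∑ j : Fin d, ∑ i : Fin d, Complex.normSq (σ i j) : ℝ) : ℂ) := by
    rw [Matrix.trace]
    push_cast
    refine Finset.sum_congr rfl fun j _ => ?_
    rw [Matrix.diag_apply, Matrix.mul_apply]
    refine Finset.sum_congr rfl fun i _ => ?_
    have hr : σ j i = starRingEnd ℂ (σ i j) := by
      conv_lhs => rw [← hσ.eq]
      rfl
    rw [hr, mul_comm, Complex.mul_conj]
  rw [h1] at h
  have h2 : (∑ j : Fin d, ∑ i : Fin d, Complex.normSq (σ i j) : ℝ) = 0 := by exact_mod_cast h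
  have h3 : ∀ j ∈ Finset.univ, ∀ i ∈ Finset.univ, Complex.normSq (σ (i : Fin d) (j : Fin d)) = 0 := by
    have := (Finset.sum_eq_zero_iff_of_nonneg (fun j _ =>
      Finset.sum_nonneg fun i _ => Complex.normSq_nonneg _)).mp h2
    intro j hj i hi
    exact (Finset.sum_eq_zero_iff_of_nonneg fun i _ => Complex.normSq_nonneg _).mp (this j hj) i hi
  ext i j
  simpa using Complex.normSq_eq_zero.mp (h3 j (Finset.mem_univ _) i (Finset.mem_univ _))

theorem master_frame (f : Mat d → ℝ) (hf : FrameFn d f) :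
    ∃! ρ : Mat d, ρ.PosSemidef ∧ ρ.trace = 1 ∧
      ∀ E : Mat d, IsEffect E → (ρ * E).trace = ((f E : ℝ) : ℂ) := by
  refine ⟨rhoM f, ⟨rhoM_psd hf, rhoM_trace hf, fun E hE => rhoM_eff hf hE⟩, ?_⟩
  rintro ρ' ⟨hpsd', htr', heff'⟩
  set σ : Mat d := ρ' - rhoM f with hσdef
  have hσherm : σ.IsHermitian := hpsd'.1.sub (rhoM_herm hf)
  have hσtr : σ.trace = 0 := by
    rw [hσdef, Matrix.trace_sub, htr', rhoM_trace hf, sub_self]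
  have hEtr : ∀ E : Mat d, IsEffect E → (σ * E).trace = 0 := by
    intro E hE
    rw [hσdef, Matrix.sub_mul, Matrix.trace_sub, heff' E hE, rhoM_eff hf hE, sub_self]
  have hHtr : ∀ H : Mat d, H.IsHermitian → (σ * H).trace = 0 := by
    intro H hH
    set c : ℝ := (negP hH).trace.re + 1 with hc
    have hcpos : (negP hH).trace.re < c := by rw [hc]; linarith
    have hP : (H + ((c:ℝ):ℂ) • 1).PosSemidef := by
      have hpn := posP_sub_negP hH
      have heq : H + ((c:ℝ):ℂ) • 1 = posP hH + (((c:ℝ):ℂ) • 1 - negP hH) := by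
        calc H + ((c:ℝ):ℂ) • 1 = (posP hH - negP hH) + ((c:ℝ):ℂ) • 1 := by rw [hpn]
          _ = posP hH + (((c:ℝ):ℂ) • 1 - negP hH) := by abel
      rw [heq]
      exact (posP_psd hH).add (smul_one_sub_psd (negP_psd hH) hcpos)
    set P : Mat d := H + ((c:ℝ):ℂ) • 1 with hPdef
    set s : ℝ := P.trace.re + 1 with hs
    have hsP : P.trace.re < s := by rw [hs]; linarith
    have hs0 : 0 < s := by
      rw [hs]; linarith [psd_trace_re_nonneg hP]
    have hEffP := eff_of_scale hP hsP
    have h0 : (σ * ((((s⁻¹:ℝ)):ℂ) • P)).trace = 0 := hEtr _ hEffP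
    have h1 : (σ * ((((s⁻¹:ℝ)):ℂ) • P)).trace = (((s⁻¹:ℝ)):ℂ) * (σ * P).trace := by
      rw [Matrix.mul_smul, Matrix.trace_smul, smul_eq_mul]
    have h2 : (σ * P).trace = 0 := by
      have hne : ((((s⁻¹:ℝ)):ℂ)) ≠ 0 := by
        simp only [ne_eq, Complex.ofReal_eq_zero, inv_eq_zero]
        exact ne_of_gt hs0
      rw [h1] at h0
      exact (mul_eq_zero.mp h0).resolve_left hne
    have h3 : (σ * P).trace = (σ * H).trace + ((c:ℝ):ℂ) * σ.trace := by
      rw [hPdef, Matrix.mul_add, Matrix.trace_add, Matrix.mul_smul, Matrix.trace_smul,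
        mul_one, smul_eq_mul]
    rw [h3, hσtr, mul_zero, add_zero] at h2
    exact h2
  have hall : ∀ B : Mat d, (σ * B).trace = 0 := by
    intro B
    have hB : B = ReM B + Complex.I • ImM B := (ReM_add_I_smul_ImM B).symm
    rw [hB, Matrix.mul_add, Matrix.trace_add, Matrix.mul_smul, Matrix.trace_smul,
      hHtr _ (ReM_herm B), hHtr _ (ImM_herm B), smul_zero, zero_add]
  have : σ = 0 := herm_trace_mul_self_zero hσherm (hall σ)
  rw [hσdef] at this
  exact sub_eq_zero.mp this

/-- A POVM with `k` outcomes on `ℂ^d`. -/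
def IsPOVM {d k : ℕ} (M : Fin k → Matrix (Fin d) (Fin d) ℂ) : Prop :=
  (∀ b, (M b).PosSemidef) ∧ ∑ b, M b = 1

/-- Gleason–Busch theorem. A consistent assignment of outcome
probabilities to all POVMs (affine under mixing, respecting coarse-grainings,
and depending only on the effect) comes from a unique density matrix, if
`d ≥ 2`. -/
theorem gleason_busch
    {d : ℕ} (hd : 2 ≤ d)
    (p : ∀ k : ℕ, (Fin k → Matrix (Fin d) (Fin d) ℂ) → Fin k → ℝ)
    (hdist : ∀ k M, IsPOVM M → (∀ b, 0 ≤ p k M b) ∧ ∑ b, p k M b = 1)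
    (hmix : ∀ k (M N : Fin k → Matrix (Fin d) (Fin d) ℂ), IsPOVM M → IsPOVM N →
      ∀ t : ℝ, 0 ≤ t → t ≤ 1 → ∀ b,
        p k (fun c => (t : ℂ) • M c + ((1 - t : ℝ) : ℂ) • N c) b
          = t * p k M b + (1 - t) * p k N b)
    (heff : ∀ k k' (M : Fin k → Matrix (Fin d) (Fin d) ℂ)
        (M' : Fin k' → Matrix (Fin d) (Fin d) ℂ) b b',
      IsPOVM M → IsPOVM M' → M b = M' b' → p k M b = p k' M' b')
    (hcg : ∀ k k' (g : Fin k → Fin k') (M : Fin k → Matrix (Fin d) (Fin d) ℂ),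
      IsPOVM M → ∀ b' : Fin k',
        p k' (fun c => ∑ b ∈ Finset.univ.filter (fun b => g b = c), M b) b'
          = ∑ b ∈ Finset.univ.filter (fun b => g b = b'), p k M b) :
    ∃! ρ : Matrix (Fin d) (Fin d) ℂ,
      ρ.PosSemidef ∧ ρ.trace = 1 ∧
      ∀ k M, IsPOVM M → ∀ b, (ρ * M b).trace = ((p k M b : ℝ) : ℂ) := by

  classical
  set f : Mat d → ℝ := fun E => p 2 ![E, 1 - E] 0 with hfdef
  -- a POVM from an effect
  have pov2 : ∀ E : Mat d, IsEffect E → IsPOVM ![E, 1 - E] := by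
    intro E hE
    constructor
    · intro b
      fin_cases b
      · simpa using hE.1
      · simpa using hE.2
    · rw [Fin.sum_univ_two]
      simp
  -- each POVM element is an effect
  have eff_povm : ∀ k (M : Fin k → Mat d), IsPOVM M → ∀ b, IsEffect (M b) := by
    intro k M hM b
    refine ⟨hM.1 b, ?_⟩
    have h1 : (1 : Mat d) - M b = ∑ c ∈ Finset.univ.erase b, M c := by
      rw [← hM.2, ← Finset.sum_erase_add Finset.univ M (Finset.mem_univ b)]
      abel
    rw [h1]
    exact psd_sum _ _ fun c _ => hM.1 c
  -- p only depends on the effect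
  have p_eq_f : ∀ k (M : Fin k → Mat d), IsPOVM M → ∀ b, p k M b = f (M b) := by
    intro k M hM b
    exact heff k 2 M ![M b, 1 - M b] b 0 hM (pov2 _ (eff_povm k M hM b)) (by simp)
  -- coarse graining of POVM is a POVM
  have povm_cg : ∀ k k' (g : Fin k → Fin k') (M : Fin k → Mat d), IsPOVM M →
      IsPOVM (fun c => ∑ b ∈ Finset.univ.filter (fun b => g b = c), M b) := by
    intro k k' g M hM
    constructor
    · intro c
      exact psd_sum _ _ fun b _ => hM.1 b
    · rw [Finset.sum_fiberwise_of_maps_to (fun b _ => Finset.mem_univ (g b)) M]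
      exact hM.2
  -- f 0 = 0
  have f_zero' : f 0 = 0 := by
    set N : Fin 3 → Mat d := ![0, 0, 1] with hN
    have hNpovm : IsPOVM N := by
      constructor
      · intro b
        fin_cases b
        · simpa [hN] using Matrix.PosSemidef.zero
        · simpa [hN] using Matrix.PosSemidef.zero
        · simpa [hN] using Matrix.PosSemidef.one
      · rw [Fin.sum_univ_three]
        simp [hN]
    have hflt1 : (Finset.univ.filter (fun b => (![0,1,1] : Fin 3 → Fin 2) b = 0)) = {0} := by decide
    have hflt2 : (Finset.univ.filter (fun b => (![0,0,1] : Fin 3 → Fin 2) b = 0)) = {0, 1} := by decide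
    have h1 := hcg 3 2 ![0,1,1] N hNpovm 0
    have h2 := hcg 3 2 ![0,0,1] N hNpovm 0
    rw [hflt1, Finset.sum_singleton] at h1
    rw [hflt2] at h2
    rw [show (∑ b ∈ ({0, 1} : Finset (Fin 3)), p 3 N b) = p 3 N 0 + p 3 N 1 by
      rw [Finset.sum_insert (by decide), Finset.sum_singleton]] at h2
    have heq01 : p 3 N 0 = p 3 N 1 := heff 3 3 N N 0 1 hNpovm hNpovm (by simp [hN])
    have hsame : p 2 (fun c => ∑ b ∈ Finset.univ.filter (fun b => (![0,1,1] : Fin 3 → Fin 2) b = c), N b) 0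
        = p 2 (fun c => ∑ b ∈ Finset.univ.filter (fun b => (![0,0,1] : Fin 3 → Fin 2) b = c), N b) 0 := by
      refine heff 2 2 _ _ 0 0 (povm_cg 3 2 _ N hNpovm) (povm_cg 3 2 _ N hNpovm) ?_
      rw [hflt1, hflt2, Finset.sum_singleton,
        Finset.sum_insert (by decide), Finset.sum_singleton]
      simp [hN]
    have hp0 : p 3 N 0 = 0 := by
      rw [h1, h2] at hsame
      linarith [hsame, heq01]
    have := p_eq_f 3 N hNpovm 0
    rw [hp0] at this
    rw [show N 0 = 0 by simp [hN]] at this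
    exact this.symm
  -- f 1 = 1
  have f_one' : f 1 = 1 := by
    have hM : IsPOVM ![(1 : Mat d), 1 - 1] := pov2 1 eff_one
    have hsum := (hdist 2 ![(1 : Mat d), 1 - 1] hM).2
    rw [Fin.sum_univ_two] at hsum
    have h1 : p 2 ![(1 : Mat d), 1 - 1] 1 = f 0 :=
      (p_eq_f 2 ![(1 : Mat d), 1 - 1] hM 1).trans (congrArg f (by simp))
    rw [h1, f_zero'] at hsum
    have : p 2 ![(1 : Mat d), 1 - 1] 0 = f 1 := rfl
    linarith [hsum, this]
  -- additivity
  have f_add' : ∀ E₁ E₂ : Mat d, IsEffect E₁ → IsEffect E₂ →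
      ((1 : Mat d) - (E₁ + E₂)).PosSemidef → f (E₁ + E₂) = f E₁ + f E₂ := by
    intro E₁ E₂ h1 h2 h12
    set M3 : Fin 3 → Mat d := ![E₁, E₂, 1 - (E₁ + E₂)] with hM3
    have hM3povm : IsPOVM M3 := by
      constructor
      · intro b
        fin_cases b
        · simpa [hM3] using h1.1
        · simpa [hM3] using h2.1
        · simpa [hM3] using h12
      · rw [Fin.sum_univ_three]
        show E₁ + E₂ + ((1 : Mat d) - (E₁ + E₂)) = 1
        abel
    have hflt : (Finset.univ.filter (fun b => (![0,0,1] : Fin 3 → Fin 2) b = 0)) = {0, 1} := by decide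
    have hcg1 := hcg 3 2 ![0,0,1] M3 hM3povm 0
    rw [hflt] at hcg1
    rw [show (∑ b ∈ ({0, 1} : Finset (Fin 3)), p 3 M3 b) = p 3 M3 0 + p 3 M3 1 by
      rw [Finset.sum_insert (by decide), Finset.sum_singleton]] at hcg1
    have hF := povm_cg 3 2 ![0,0,1] M3 hM3povm
    have hF0 : (∑ b ∈ Finset.univ.filter (fun b => (![0,0,1] : Fin 3 → Fin 2) b = 0), M3 b)
        = E₁ + E₂ := by
      rw [hflt, Finset.sum_insert (by decide), Finset.sum_singleton]
      simp [hM3]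
    have hL : p 2 (fun c => ∑ b ∈ Finset.univ.filter (fun b => (![0,0,1] : Fin 3 → Fin 2) b = c), M3 b) 0
        = f (E₁ + E₂) := by
      rw [p_eq_f 2 _ hF 0, hF0]
    have hp0 : p 3 M3 0 = f E₁ := by
      have := p_eq_f 3 M3 hM3povm 0
      rwa [show M3 0 = E₁ by simp [hM3]] at this
    have hp1 : p 3 M3 1 = f E₂ := by
      have := p_eq_f 3 M3 hM3povm 1
      rwa [show M3 1 = E₂ by simp [hM3]] at this
    rw [hL, hp0, hp1] at hcg1
    exact hcg1
  -- scaling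
  have f_scale' : ∀ E : Mat d, IsEffect E → ∀ t : ℝ, 0 ≤ t → t ≤ 1 →
      f (((t:ℝ):ℂ) • E) = t * f E := by
    intro E hE t ht ht1
    have hN : IsPOVM ![(0 : Mat d), 1] := by
      constructor
      · intro b
        fin_cases b
        · simpa using Matrix.PosSemidef.zero
        · simpa using Matrix.PosSemidef.one
      · rw [Fin.sum_univ_two]; simp
    have hmx := hmix 2 ![E, 1 - E] ![(0 : Mat d), 1] (pov2 E hE) hN t ht ht1 0
    set K : Fin 2 → Mat d :=
      fun c => (t : ℂ) • (![E, 1 - E]) c + ((1 - t : ℝ) : ℂ) • (![(0 : Mat d), 1]) c with hK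
    have hKpovm : IsPOVM K := by
      constructor
      · intro b
        exact (psd_smul ((pov2 E hE).1 b) ht).add (psd_smul (hN.1 b) (by linarith))
      · rw [Fin.sum_univ_two, hK]
        show ((t : ℂ) • E + ((1 - t : ℝ) : ℂ) • (0 : Mat d))
          + ((t : ℂ) • ((1 : Mat d) - E) + ((1 - t : ℝ) : ℂ) • (1 : Mat d)) = 1
        rw [smul_zero, add_zero, smul_sub]
        have : ((t : ℂ)) • (1 : Mat d) + (((1 - t : ℝ) : ℂ)) • (1 : Mat d) = 1 := by
          rw [← add_smul]
          push_cast
          rw [show ((t:ℂ) + (1 - (t:ℂ))) = 1 by ring, one_smul]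
        calc (t : ℂ) • E + ((t : ℂ) • (1 : Mat d) - (t : ℂ) • E + ((1 - t : ℝ) : ℂ) • (1 : Mat d))
            = ((t : ℂ)) • (1 : Mat d) + (((1 - t : ℝ) : ℂ)) • (1 : Mat d) := by abel
          _ = 1 := this
    have hK0 : K 0 = ((t:ℝ):ℂ) • E := by
      show (t : ℂ) • E + ((1 - t : ℝ) : ℂ) • (0 : Mat d) = ((t:ℝ):ℂ) • E
      rw [smul_zero, add_zero]
    have hLHS : p 2 K 0 = f (((t:ℝ):ℂ) • E) := by
      rw [p_eq_f 2 K hKpovm 0, hK0]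
    have hN0 : p 2 ![(0 : Mat d), 1] 0 = f 0 := by
      have := p_eq_f 2 ![(0 : Mat d), 1] hN 0
      rwa [show (![(0 : Mat d), 1]) 0 = 0 by simp] at this
    have hM0 : p 2 ![E, 1 - E] 0 = f E := rfl
    rw [show p 2 (fun c => (t : ℂ) • (![E, 1 - E]) c + ((1 - t : ℝ) : ℂ) • (![(0 : Mat d), 1]) c) 0
        = p 2 K 0 from rfl, hLHS, hM0, hN0, f_zero'] at hmx
    rw [hmx]
    ring
  have hf : FrameFn d f :=
    ⟨f_scale', f_add', fun E hE => (hdist 2 ![E, 1 - E] (pov2 E hE)).1 0, f_one'⟩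
  obtain ⟨ρ, ⟨hρpsd, hρtr, hρeff⟩, hρuniq⟩ := master_frame f hf
  refine ⟨ρ, ⟨hρpsd, hρtr, fun k M hM b => ?_⟩, fun ρ' ⟨h1', h2', h3'⟩ => ?_⟩
  · rw [hρeff (M b) (eff_povm k M hM b), p_eq_f k M hM b]
  · refine hρuniq ρ' ⟨h1', h2', fun E hE => ?_⟩
    have := h3' 2 ![E, 1 - E] (pov2 E hE) 0
    rwa [show (![E, 1 - E]) 0 = E by simp] at this
end

section
/- Suppose a joint distribution $p(a,b|x,y)$ admits an ontological decomposition $p(a,b|x,y) = \sum_\lambda p(a|x,y) p(\lambda|a,x) p(b|y,\lambda)$ in which (i) Alice's marginal $p(a|x,y)$ is independent of $y$ (no-signaling), writing it $p(a|x)$, and (ii) the marginal hidden-variable distribution $p(\lambda) := \sum_a p(a|x)p(\lambda|a,x)$ is independent of $x$. Then $p(a,b|x,y)$ admits a local hidden variable model: $p(a,b|x,y) = \sum_\lambda p(\lambda) q(a|x,\lambda) p(b|y,\lambda)$ for some conditional distributions $q(a|x,\lambda)$. -/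
open BigOperators

/-- An ontological model of a no-signaling correlation whose
hidden-variable marginal is independent of Alice's setting (preparation
noncontextuality) is a local hidden variable model. -/
theorem prep_noncontextual_ontological_model_is_lhv
    {A B X Y Λ : Type} [Fintype A] [Fintype B] [Fintype X] [Fintype Y] [Fintype Λ]
    (p : A → B → X → Y → ℝ)
    (paX : A → X → ℝ) (plc : Λ → A → X → ℝ) (pb : B → Y → Λ → ℝ)
    (hpaXpos : ∀ a x, 0 ≤ paX a x) (hpaXsum : ∀ x, ∑ a, paX a x = 1)
    (hplcpos : ∀ l a x, 0 ≤ plc l a x) (hplcsum : ∀ a x, ∑ l, plc l a x = 1)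
    (hpbpos : ∀ b y l, 0 ≤ pb b y l) (hpbsum : ∀ y l, ∑ b, pb b y l = 1)
    (hdecomp : ∀ a b x y, p a b x y = ∑ l, paX a x * plc l a x * pb b y l)
    (pl : Λ → ℝ)
    (hmarg : ∀ x l, pl l = ∑ a, paX a x * plc l a x) :
    ∃ q : A → X → Λ → ℝ,
      (∀ a x l, 0 ≤ q a x l) ∧ (∀ x l, ∑ a, q a x l = 1) ∧
      ∀ a b x y, p a b x y = ∑ l, pl l * q a x l * pb b y l := by
  refine ⟨fun a x l => if pl l = 0 then paX a x else paX a x * plc l a x / pl l, ?_, ?_, ?_⟩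
  · intro a x l
    by_cases h : pl l = 0 <;> simp [h]
    · exact hpaXpos a x
    · exact div_nonneg (mul_nonneg (hpaXpos a x) (hplcpos l a x))
        (by rw [hmarg x l]; exact Finset.sum_nonneg fun a _ =>
          mul_nonneg (hpaXpos a x) (hplcpos l a x))
  · intro x l
    by_cases h : pl l = 0
    · simp [h, hpaXsum x]
    · simp only [h, if_false]
      rw [← Finset.sum_div, ← hmarg x l, div_self h]
  · intro a b x y
    rw [hdecomp a b x y]
    apply Finset.sum_congr rfl
    intro l _
    by_cases h : pl l = 0
    · simp only [h, if_true, zero_mul]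
      have hz : paX a x * plc l a x = 0 := by
        have := (Finset.sum_eq_zero_iff_of_nonneg (fun a _ =>
          mul_nonneg (hpaXpos a x) (hplcpos l a x))).mp ((hmarg x l) ▸ h)
        exact this a (Finset.mem_univ a)
      rw [hz, zero_mul]
    · simp only [h, if_false]
      field_simp
end

section
/- Let $\sigma_{a|x} = \tfrac14(I + (-1)^a v\, \vec m_x\cdot\vec\sigma)$ for $x\in\{1,2\}$ with orthonormal Bloch vectors $\vec m_1 \perp \vec m_2$. If $v \le 1/\sqrt{2}$, this assemblage admits a local hidden state model, i.e. is unsteerable. -/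
open Matrix BigOperators ComplexOrder

/-- The three Pauli matrices. -/
def pauli : Fin 3 → Matrix (Fin 2) (Fin 2) ℂ :=
  ![!![0, 1; 1, 0], !![0, -Complex.I; Complex.I, 0], !![1, 0; 0, -1]]

/-- `\vec m ⋅ \vec σ` for a real vector `m`. -/
noncomputable def dotPauli (m : Fin 3 → ℝ) : Matrix (Fin 2) (Fin 2) ℂ :=
  ∑ i, (m i : ℂ) • pauli i

lemma dotPauli_apply (n : Fin 3 → ℝ) :
    dotPauli n = !![(n 2 : ℂ), (n 0 : ℂ) - Complex.I * (n 1 : ℂ);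
                    (n 0 : ℂ) + Complex.I * (n 1 : ℂ), -(n 2 : ℂ)] := by
  unfold dotPauli pauli
  rw [Fin.sum_univ_three]
  ext i j
  fin_cases i <;> fin_cases j <;> simp <;> ring

set_option maxHeartbeats 2000000 in
lemma psd_half (n : Fin 3 → ℝ) (hn : ∑ i, n i ^ 2 ≤ 1) :
    (((1:ℂ)/2) • ((1 : Matrix (Fin 2) (Fin 2) ℂ) + dotPauli n)).PosSemidef ∧
    (((1:ℂ)/2) • ((1 : Matrix (Fin 2) (Fin 2) ℂ) + dotPauli n)).trace = 1 := by
  rw [Fin.sum_univ_three] at hn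
  refine ⟨Matrix.PosSemidef.of_dotProduct_mulVec_nonneg ?_ ?_, ?_⟩
  · show _ᴴ = _
    rw [dotPauli_apply]
    ext i j
    fin_cases i <;> fin_cases j <;>
      simp [Matrix.conjTranspose_apply, Matrix.one_apply, Complex.conj_ofReal] <;> ring
  · intro x
    rw [dotPauli_apply]
    simp only [dotProduct, Matrix.mulVec, Fin.sum_univ_two, Pi.star_apply,
      Matrix.smul_apply, Matrix.add_apply, Matrix.one_apply, Matrix.cons_val', Matrix.cons_val_zero,
      Matrix.cons_val_one, Matrix.head_cons, Matrix.empty_val', Matrix.cons_val_fin_one,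
      Matrix.head_fin_const, if_true, if_false]
    rw [Complex.le_def]
    constructor
    · simp [Complex.add_re, Complex.mul_re, Complex.mul_im, Complex.add_im,
        Complex.ofReal_re, Complex.ofReal_im, Complex.div_re, Complex.div_im]
      nlinarith [sq_nonneg ((x 0).re^2 + (x 0).im^2 - (x 1).re^2 - (x 1).im^2),
        sq_nonneg (n 0 * ((x 0).re^2+(x 0).im^2-(x 1).re^2-(x 1).im^2) - n 2 * (2*((x 0).re*(x 1).re + (x 0).im*(x 1).im))),
        sq_nonneg (n 1 * ((x 0).re^2+(x 0).im^2-(x 1).re^2-(x 1).im^2) - n 2 * (2*((x 0).re*(x 1).im - (x 0).im*(x 1).re))),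
        sq_nonneg (n 0 * (2*((x 0).re*(x 1).im - (x 0).im*(x 1).re)) - n 1 * (2*((x 0).re*(x 1).re + (x 0).im*(x 1).im))),
        sq_nonneg ((x 0).re^2 + (x 0).im^2 + (x 1).re^2 + (x 1).im^2
          + (n 0 * (2*((x 0).re*(x 1).re + (x 0).im*(x 1).im))
             - n 1 * (2*((x 0).re*(x 1).im - (x 0).im*(x 1).re))
             + n 2 * ((x 0).re^2+(x 0).im^2-(x 1).re^2-(x 1).im^2))),
        sq_nonneg ((x 0).re^2 + (x 0).im^2 + (x 1).re^2 + (x 1).im^2)]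
    · simp [Complex.add_im, Complex.mul_im, Complex.mul_re, Complex.add_re,
        Complex.ofReal_re, Complex.ofReal_im]
      ring
  · rw [dotPauli_apply]
    simp [Matrix.trace, Matrix.diag, Fin.sum_univ_two, Matrix.one_apply]
    ring

set_option maxHeartbeats 2000000 in
/-- the qubit assemblage `σ_{a|x} = ¼(I + (-1)^a v m_x⋅σ)` for
two orthonormal Bloch vectors is unsteerable whenever `v ≤ 1/√2`. -/
theorem two_setting_qubit_assemblage_unsteerable_below_critical_visibility
    (v : ℝ) (hv0 : 0 ≤ v) (hv : v ≤ 1 / Real.sqrt 2)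
    (m : Fin 2 → Fin 3 → ℝ)
    (hunit : ∀ x, ∑ i, m x i ^ 2 = 1)
    (horth : ∑ i, m 0 i * m 1 i = 0) :
    ∃ (Λ : Type) (_ : Fintype Λ) (pl : Λ → ℝ) (q : Fin 2 → Fin 2 → Λ → ℝ)
      (ρ : Λ → Matrix (Fin 2) (Fin 2) ℂ),
      (∀ l, 0 ≤ pl l) ∧ (∑ l, pl l = 1) ∧
      (∀ a x l, 0 ≤ q a x l) ∧ (∀ x l, ∑ a, q a x l = 1) ∧
      (∀ l, (ρ l).PosSemidef ∧ (ρ l).trace = 1) ∧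
      ∀ a x : Fin 2,
        ((1 : ℂ) / 4) • ((1 : Matrix (Fin 2) (Fin 2) ℂ)
            + ((-1 : ℂ) ^ (a : ℕ) * (v : ℂ)) • dotPauli (m x))
          = ∑ l, ((pl l * q a x l : ℝ) : ℂ) • ρ l := by
  have hv2 : v ^ 2 ≤ 1 / 2 := by
    have h := pow_le_pow_left₀ hv0 hv 2
    rwa [div_pow, one_pow, Real.sq_sqrt (by norm_num : (0:ℝ) ≤ 2)] at h
  have sqneg : ∀ k : ℕ, ((-1:ℝ) ^ k) ^ 2 = 1 := by
    intro k; rw [← pow_mul, mul_comm, pow_mul]; norm_num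
  refine ⟨Fin 2 × Fin 2, inferInstance,
    fun _ => 1/4,
    fun a x l => if (if x = 0 then l.1 else l.2) = a then 1 else 0,
    fun l => ((1:ℂ)/2) • ((1 : Matrix (Fin 2) (Fin 2) ℂ)
      + dotPauli (fun i => v * ((-1:ℝ)^(l.1:ℕ) * m 0 i + (-1:ℝ)^(l.2:ℕ) * m 1 i))),
    ?_, ?_, ?_, ?_, ?_, ?_⟩
  · intro l; norm_num
  · simp [Finset.sum_const, Finset.card_univ]
  · intro a x l; dsimp only; split_ifs <;> norm_num
  · intro x l; fin_cases x <;> fin_cases l <;> norm_num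
  · intro l
    apply psd_half
    obtain ⟨s, hsd⟩ : ∃ s : ℝ, (-1:ℝ)^(l.1:ℕ) = s := ⟨_, rfl⟩
    obtain ⟨t, htd⟩ : ∃ t : ℝ, (-1:ℝ)^(l.2:ℕ) = t := ⟨_, rfl⟩
    have hs : s ^ 2 = 1 := by rw [← hsd]; exact sqneg _
    have ht : t ^ 2 = 1 := by rw [← htd]; exact sqneg _
    have h0 := hunit 0; have h1 := hunit 1
    rw [Fin.sum_univ_three] at h0 h1 horth ⊢
    rw [hsd, htd]
    have key : (v * (s * m 0 0 + t * m 1 0))^2 + (v * (s * m 0 1 + t * m 1 1))^2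
        + (v * (s * m 0 2 + t * m 1 2))^2 = 2 * v^2 := by
      linear_combination (v^2 * (m 0 0^2 + m 0 1^2 + m 0 2^2)) * hs
        + (v^2 * (m 1 0^2 + m 1 1^2 + m 1 2^2)) * ht
        + v^2 * h1 + v^2 * h0 + 2*s*t*v^2 * horth
    rw [key]; linarith
  · intro a x
    simp only [Fintype.sum_prod_type, Fin.sum_univ_two, dotPauli_apply]
    fin_cases a <;> fin_cases x <;>
      · ext i j
        fin_cases i <;> fin_cases j <;>
          · simp [Matrix.one_apply]
            ring
end
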